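/- arXiv:2303.00674 — 2 statements merged into one kernel-verified Lean document; each statement's English description precedes it below -/
import Mathlib

section
/- Let φ : ℝ^d → ℝ^d be C^2 with bounded derivatives, and let e^{uφ} denote its time-u flow. Let X : ℝ^d → ℝ^d be a C^1 diffeomorphism and for u ∈ [0,1] define w(u;y) as the solution of w'(u;y) = −(D(e^{uφ} ∘ X)(w(u;y)))^{-1} φ(e^{uφ}(X(w(u;y)))), w(0;y) = y. Then e^{uφ}(X(w(u;y))) = X(y) for all u ∈ [0,1]; in particular e^{φ}(X(w(1;y))) = X(y), so w(1;·) gives the inverse of the jump map on the level of inverse flows. -/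
/-- the key identity e^{uφ}(X(w(u;y))) = X(y), where w solves
w'(u;y) = −(D(e^{uφ}∘X)(w(u;y)))⁻¹ φ(e^{uφ}(X(w(u;y)))), w(0;y) = y.
The inverse Jacobian is represented by a family J of continuous linear maps
inverting the Jacobian of e^{uφ} ∘ X. -/
theorem inverse_flow_jump_identity
    (d : ℕ) (φ : (Fin d → ℝ) → (Fin d → ℝ))
    (hφ_smooth : ContDiff ℝ 2 φ)
    (C : ℝ) (hφ_deriv_bdd : ∀ x, ‖fderiv ℝ φ x‖ ≤ C)
    -- the flow e^{uφ}
    (e : ℝ → (Fin d → ℝ) → (Fin d → ℝ))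
    (he0 : ∀ x, e 0 x = x)
    (he : ∀ u x, HasDerivAt (fun v => e v x) (φ (e u x)) u)
    -- X is a C¹ diffeomorphism
    (X Xinv : (Fin d → ℝ) → (Fin d → ℝ))
    (hX_smooth : ContDiff ℝ 1 X) (hXinv_smooth : ContDiff ℝ 1 Xinv)
    (hX₁ : ∀ x, Xinv (X x) = x) (hX₂ : ∀ x, X (Xinv x) = x)
    -- J u x is the inverse of the Jacobian D(e^{uφ} ∘ X) at x
    (J : ℝ → (Fin d → ℝ) → ((Fin d → ℝ) →L[ℝ] (Fin d → ℝ)))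
    (hJ₁ : ∀ u x, (J u x).comp (fderiv ℝ (fun y => e u (X y)) x)
      = ContinuousLinearMap.id ℝ (Fin d → ℝ))
    (hJ₂ : ∀ u x, (fderiv ℝ (fun y => e u (X y)) x).comp (J u x)
      = ContinuousLinearMap.id ℝ (Fin d → ℝ))
    -- the process w
    (w : ℝ → (Fin d → ℝ) → (Fin d → ℝ))
    (hw0 : ∀ y, w 0 y = y)
    (hw : ∀ y, ∀ u ∈ Set.Icc (0:ℝ) 1,
      HasDerivAt (fun v => w v y)
        (-(J u (w u y) (φ (e u (X (w u y)))))) u) :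
    ∀ y, ∀ u ∈ Set.Icc (0:ℝ) 1, e u (X (w u y)) = X y := by
  -- dispose of the degenerate case d = 0
  rcases Nat.eq_zero_or_pos d with hd | hd
  · subst hd
    haveI : Subsingleton (Fin 0 → ℝ) := ⟨fun a b => funext fun i => i.elim0⟩
    intro y u _
    exact Subsingleton.elim _ _
  have hC0 : (0:ℝ) ≤ C := le_trans (norm_nonneg _) (hφ_deriv_bdd 0)
  set K : NNReal := ⟨C, hC0⟩ with hKdef
  have hKC : (K : ℝ) = C := rfl
  -- φ is Lipschitz
  have lipφ : LipschitzWith K φ := by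
    apply lipschitzWith_of_nnnorm_fderiv_le
      (hφ_smooth.differentiable (by norm_num))
    intro x
    rw [← NNReal.coe_le_coe, coe_nnnorm, hKC]
    exact hφ_deriv_bdd x
  -- e u ∘ X is differentiable everywhere
  have hdiff : ∀ u x, DifferentiableAt ℝ (fun z => e u (X z)) x := by
    intro u x
    by_contra h
    have h0 : fderiv ℝ (fun z => e u (X z)) x = 0 :=
      fderiv_zero_of_not_differentiableAt h
    have h2 := hJ₂ u x
    rw [h0] at h2
    have h3 := congrArg (fun T : (Fin d → ℝ) →L[ℝ] (Fin d → ℝ) =>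
      T (fun _ => (1:ℝ))) h2
    simp only [ContinuousLinearMap.zero_comp, ContinuousLinearMap.zero_apply,
      ContinuousLinearMap.id_apply] at h3
    exact one_ne_zero (congrFun h3.symm ⟨0, hd⟩)
  -- continuity in time
  have he_cont : ∀ x, Continuous fun v => e v x := fun x =>
    continuous_iff_continuousAt.mpr fun v => (he v x).differentiableAt.continuousAt
  have hφe_cont : ∀ x, Continuous fun s => φ (e s x) := fun x =>
    hφ_smooth.continuous.comp (he_cont x)
  -- Grönwall: e is Lipschitz in space, uniformly for |s| ≤ 2
  have gron : ∀ (x₁ x₂ : Fin d → ℝ) (s : ℝ), |s| ≤ 2 →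
      dist (e s x₁) (e s x₂) ≤ dist x₁ x₂ * Real.exp (C * 2) := by
    intro x₁ x₂ s hs
    rcases le_total 0 s with h0s | hs0
    · have := dist_le_of_trajectories_ODE (v := fun _ x => φ x) (K := K)
        (fun _ => lipφ)
        ((he_cont x₁).continuousOn)
        (fun t _ => (he t x₁).hasDerivWithinAt)
        ((he_cont x₂).continuousOn)
        (fun t _ => (he t x₂).hasDerivWithinAt)
        (δ := dist x₁ x₂) (by rw [he0, he0]) s
        ⟨h0s, (abs_le.mp hs).2⟩ (a := 0) (b := 2)
      refine this.trans ?_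
      apply mul_le_mul_of_nonneg_left _ dist_nonneg
      apply Real.exp_le_exp.mpr
      rw [hKC, sub_zero]
      have : s ≤ 2 := (abs_le.mp hs).2
      nlinarith
    · -- backward in time: consider t ↦ e (-t) x
      have hder : ∀ (x : Fin d → ℝ) (t : ℝ),
          HasDerivAt (fun r => e (-r) x) (-(φ (e (-t) x))) t := by
        intro x t
        have h1 := (he (-t) x).scomp t (hasDerivAt_neg t)
        simpa [Function.comp_def] using h1
      have hcont' : ∀ x : Fin d → ℝ, Continuous fun r => e (-r) x := fun x =>
        (he_cont x).comp continuous_neg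
      have := dist_le_of_trajectories_ODE (v := fun _ x => -(φ x)) (K := K)
        (fun _ => lipφ.neg)
        ((hcont' x₁).continuousOn)
        (fun t _ => (hder x₁ t).hasDerivWithinAt)
        ((hcont' x₂).continuousOn)
        (fun t _ => (hder x₂ t).hasDerivWithinAt)
        (δ := dist x₁ x₂) (by rw [neg_zero, he0, he0]) (-s)
        ⟨neg_nonneg.mpr hs0, by
          have := (abs_le.mp hs).1; linarith⟩ (a := 0) (b := 2)
      simp only [neg_neg, sub_zero] at this
      refine this.trans ?_
      apply mul_le_mul_of_nonneg_left _ dist_nonneg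
      apply Real.exp_le_exp.mpr
      rw [hKC]
      have := (abs_le.mp hs).1
      nlinarith
  -- FTC for the flow
  have ftc : ∀ (x : Fin d → ℝ) (a b : ℝ),
      (∫ s in a..b, φ (e s x)) = e b x - e a x := fun x a b =>
    intervalIntegral.integral_eq_sub_of_hasDerivAt (fun t _ => he t x)
      ((hφe_cont x).intervalIntegrable a b)
  intro y
  -- key: the map u ↦ e u (X (w u y)) has derivative 0 on [0,1]
  have key : ∀ u₀ ∈ Set.Icc (0:ℝ) 1,
      HasDerivAt (fun u => e u (X (w u y))) 0 u₀ := by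
    intro u₀ hu₀
    have hγ' := hw y u₀ hu₀
    -- the "space" part
    have hg : HasDerivAt (fun u => e u₀ (X (w u y)))
        (-(φ (e u₀ (X (w u₀ y))))) u₀ := by
      have hf := (hdiff u₀ (w u₀ y)).hasFDerivAt
      have h := hf.comp_hasDerivAt u₀ hγ'
      have hid : (fderiv ℝ (fun z => e u₀ (X z)) (w u₀ y))
          (J u₀ (w u₀ y) (φ (e u₀ (X (w u₀ y))))) = φ (e u₀ (X (w u₀ y))) := by
        have h2 := hJ₂ u₀ (w u₀ y)
        have := congrArg (fun T : (Fin d → ℝ) →L[ℝ] (Fin d → ℝ) =>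
          T (φ (e u₀ (X (w u₀ y))))) h2
        simpa using this
      rw [map_neg, hid] at h
      exact h
    -- the "time" part
    have hA : HasDerivAt (fun u => e u (X (w u y)) - e u₀ (X (w u y)))
        (φ (e u₀ (X (w u₀ y)))) u₀ := by
      rw [hasDerivAt_iff_isLittleO, Asymptotics.isLittleO_iff]
      intro c hc
      set M := C * Real.exp (C * 2) with hM
      have hM0 : 0 ≤ M := by positivity
      set δ₁ := c / (2 * (M + 1)) with hδ₁def
      have hδ₁pos : 0 < δ₁ := by positivity
      set δ₃ := c / (2 * (C + 1)) with hδ₃def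
      have hδ₃pos : 0 < δ₃ := by positivity
      -- continuity facts
      have hcx : ContinuousAt (fun u => X (w u y)) u₀ :=
        hX_smooth.continuous.continuousAt.comp hγ'.differentiableAt.continuousAt
      have E1 : ∀ᶠ u in nhds u₀, dist (X (w u y)) (X (w u₀ y)) < δ₁ :=
        Metric.tendsto_nhds.mp hcx.tendsto δ₁ hδ₁pos
      have hez : ContinuousAt (fun s => e s (X (w u₀ y))) u₀ :=
        (he_cont (X (w u₀ y))).continuousAt
      obtain ⟨δ₂, hδ₂pos, hδ₂⟩ := Metric.continuousAt_iff.mp hez δ₃ hδ₃pos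
      have E3 : ∀ᶠ u in nhds u₀, |u - u₀| < min δ₂ 1 := by
        have h := Metric.ball_mem_nhds u₀ (lt_min hδ₂pos one_pos)
        filter_upwards [h] with u hu
        simpa [Real.dist_eq] using hu
      filter_upwards [E1, E3] with u hu1 hu3
      have hsub : e u (X (w u y)) - e u₀ (X (w u y)) -
          (e u₀ (X (w u₀ y)) - e u₀ (X (w u₀ y))) -
          (u - u₀) • φ (e u₀ (X (w u₀ y)))
          = ∫ s in u₀..u, (φ (e s (X (w u y))) - φ (e u₀ (X (w u₀ y)))) := by
        rw [intervalIntegral.integral_sub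
          ((hφe_cont (X (w u y))).intervalIntegrable u₀ u)
          (intervalIntegrable_const), ftc, intervalIntegral.integral_const,
          sub_self, sub_zero]
      rw [hsub]
      have hbound : ∀ s ∈ Set.uIoc u₀ u,
          ‖φ (e s (X (w u y))) - φ (e u₀ (X (w u₀ y)))‖ ≤ c := by
        intro s hs
        have hsu : |s - u₀| ≤ |u - u₀| := by
          rcases le_total u₀ u with h | h
          · rw [Set.uIoc_of_le h] at hs
            rw [abs_of_nonneg (by linarith [hs.1.le]), abs_of_nonneg (by linarith)]
            linarith [hs.2]
          · rw [Set.uIoc_of_ge h] at hs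
            rw [abs_of_nonpos (by linarith [hs.2]), abs_of_nonpos (by linarith)]
            linarith [hs.1]
        have hs2 : |s| ≤ 2 := by
          have h1 : |u - u₀| < 1 := lt_of_lt_of_le hu3 (min_le_right _ _)
          have h2 : |s - u₀| < 1 := lt_of_le_of_lt hsu h1
          have := abs_le.mp h2.le
          rw [abs_le]
          constructor <;> [linarith [hu₀.1]; linarith [hu₀.2]]
        have h1 : dist (φ (e s (X (w u y)))) (φ (e s (X (w u₀ y))))
            ≤ C * dist (e s (X (w u y))) (e s (X (w u₀ y))) := by
          have := lipφ.dist_le_mul (e s (X (w u y))) (e s (X (w u₀ y)))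
          rwa [hKC] at this
        have h2 : dist (φ (e s (X (w u₀ y)))) (φ (e u₀ (X (w u₀ y))))
            ≤ C * dist (e s (X (w u₀ y))) (e u₀ (X (w u₀ y))) := by
          have := lipφ.dist_le_mul (e s (X (w u₀ y))) (e u₀ (X (w u₀ y)))
          rwa [hKC] at this
        have h3 := gron (X (w u y)) (X (w u₀ y)) s hs2
        have h5 : dist (e s (X (w u₀ y))) (e u₀ (X (w u₀ y))) < δ₃ := by
          apply hδ₂
          rw [Real.dist_eq]
          exact lt_of_le_of_lt hsu (lt_of_lt_of_le hu3 (min_le_left _ _))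
        have htri : dist (φ (e s (X (w u y)))) (φ (e u₀ (X (w u₀ y))))
            ≤ dist (φ (e s (X (w u y)))) (φ (e s (X (w u₀ y)))) +
              dist (φ (e s (X (w u₀ y)))) (φ (e u₀ (X (w u₀ y)))) :=
          dist_triangle _ _ _
        rw [← dist_eq_norm]
        -- arithmetic
        have hM1 : (0:ℝ) < M + 1 := by positivity
        have hC1 : (0:ℝ) < C + 1 := by linarith
        have e1 : (M + 1) * δ₁ = c / 2 := by
          rw [hδ₁def]; field_simp
        have e2 : (C + 1) * δ₃ = c / 2 := by
          rw [hδ₃def]; field_simp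
        have hd1 : dist (X (w u y)) (X (w u₀ y)) < δ₁ := hu1
        have hexp : (0:ℝ) < Real.exp (C * 2) := Real.exp_pos _
        have hCd : C * dist (e s (X (w u y))) (e s (X (w u₀ y))) ≤ M * δ₁ := by
          have h4 : dist (e s (X (w u y))) (e s (X (w u₀ y)))
              ≤ δ₁ * Real.exp (C * 2) :=
            h3.trans (mul_le_mul_of_nonneg_right hd1.le hexp.le)
          calc C * dist (e s (X (w u y))) (e s (X (w u₀ y)))
              ≤ C * (δ₁ * Real.exp (C * 2)) := mul_le_mul_of_nonneg_left h4 hC0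
            _ = M * δ₁ := by rw [hM]; ring
        have hCd2 : C * dist (e s (X (w u₀ y))) (e u₀ (X (w u₀ y))) ≤ C * δ₃ :=
          mul_le_mul_of_nonneg_left h5.le hC0
        have e1' : M * δ₁ + δ₁ = c / 2 := by rw [← e1]; ring
        have e2' : C * δ₃ + δ₃ = c / 2 := by rw [← e2]; ring
        linarith [hδ₁pos.le, hδ₃pos.le]
      have := intervalIntegral.norm_integral_le_of_norm_le_const hbound
      rwa [Real.norm_eq_abs]
    have h := hA.add hg
    have heq : (fun u => e u (X (w u y)) - e u₀ (X (w u y)) + e u₀ (X (w u y)))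
        = fun u => e u (X (w u y)) := by
      funext u; abel
    have h0 : φ (e u₀ (X (w u₀ y))) + -φ (e u₀ (X (w u₀ y))) = 0 :=
      add_neg_cancel _
    change HasDerivAt (fun u => e u (X (w u y)) - e u₀ (X (w u y)) + e u₀ (X (w u y))) _ u₀ at h
    rw [heq, h0] at h
    exact h
  -- conclude: the map is constant on [0,1]
  have hcont : ContinuousOn (fun u => e u (X (w u y))) (Set.Icc 0 1) :=
    fun u hu => (key u hu).continuousAt.continuousWithinAt
  have hconst := constant_of_has_deriv_right_zero hcont
    (fun u hu => (key u (Set.mem_Icc_of_Ico hu)).hasDerivWithinAt)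
  intro u hu
  have h1 := hconst u hu
  rwa [hw0, he0] at h1
end

section
/- Let α : ℝ^d → ℝ^{d×m}, β, σ : ℝ^d → ℝ^m be C^1 bounded with bounded derivatives and z ∈ ℝ^m. Consider on ℝ^{d+2} the vector field V(x,ξ,ζ) := (−α(x)z, −ξ β(x)ᵀz, −ξ σ(x)ᵀz). Its time-1 flow e^{Σ(·)z}(x,ξ_0,ζ_0) equals (e^{−α(·)z}(x), ξ_0 e^{−∫_0^1 β(e^{−rα(·)z}(x))ᵀz dr}, ζ_0 − ξ_0 ∫_0^1 e^{−∫_0^s β(e^{−rα(·)z}(x))ᵀz dr} σ(e^{−sα(·)z}(x))ᵀz ds). -/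
open Matrix intervalIntegral

/-- explicit time-1 flow of the full augmented vector field
V(x,ξ,ζ) = (−α(x)z, −ξ β(x)ᵀz, −ξ σ(x)ᵀz) on ℝ^d × ℝ × ℝ:
e^{Σ(·)z}(x,ξ₀,ζ₀) = (e^{−α(·)z}(x),
  ξ₀ e^{−∫₀¹ β(e^{−rα(·)z}x)ᵀz dr},
  ζ₀ − ξ₀ ∫₀¹ e^{−∫₀ˢ β(e^{−rα(·)z}x)ᵀz dr} σ(e^{−sα(·)z}x)ᵀz ds). -/
theorem augmented_jump_map_three_components
    (d m : ℕ)
    (α : (Fin d → ℝ) → (Fin d → Fin m → ℝ))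
    (β σ : (Fin d → ℝ) → (Fin m → ℝ))
    (hα : ContDiff ℝ 1 α) (hβ : ContDiff ℝ 1 β) (hσ : ContDiff ℝ 1 σ)
    (C : ℝ)
    (hα_bdd : ∀ x, ‖α x‖ ≤ C) (hβ_bdd : ∀ x, ‖β x‖ ≤ C)
    (hσ_bdd : ∀ x, ‖σ x‖ ≤ C)
    (hα_deriv_bdd : ∀ x, ‖fderiv ℝ α x‖ ≤ C)
    (hβ_deriv_bdd : ∀ x, ‖fderiv ℝ β x‖ ≤ C)
    (hσ_deriv_bdd : ∀ x, ‖fderiv ℝ σ x‖ ≤ C)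
    (z : Fin m → ℝ)
    -- F r is the flow of x ↦ −α(x)z
    (F : ℝ → (Fin d → ℝ) → (Fin d → ℝ))
    (hF0 : ∀ x, F 0 x = x)
    (hF : ∀ r x, HasDerivAt (fun ρ => F ρ x)
      (-(fun i => α (F r x) i ⬝ᵥ z)) r)
    -- Ψ u is the flow of V(x,ξ,ζ) = (−α(x)z, −ξ β(x)ᵀz, −ξ σ(x)ᵀz)
    (Ψ : ℝ → ((Fin d → ℝ) × ℝ × ℝ) → ((Fin d → ℝ) × ℝ × ℝ))
    (hΨ0 : ∀ p, Ψ 0 p = p)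
    (hΨ : ∀ u p, HasDerivAt (fun v => Ψ v p)
      (-(fun i => α (Ψ u p).1 i ⬝ᵥ z),
       -(Ψ u p).2.1 * (β (Ψ u p).1 ⬝ᵥ z),
       -(Ψ u p).2.1 * (σ (Ψ u p).1 ⬝ᵥ z)) u) :
    ∀ (x : Fin d → ℝ) (ξ₀ ζ₀ : ℝ),
      Ψ 1 (x, ξ₀, ζ₀)
        = (F 1 x,
           ξ₀ * Real.exp (-∫ r in (0:ℝ)..1, β (F r x) ⬝ᵥ z),
           ζ₀ - ξ₀ * ∫ s in (0:ℝ)..1,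
             Real.exp (-∫ r in (0:ℝ)..s, β (F r x) ⬝ᵥ z)
               * (σ (F s x) ⬝ᵥ z)) := by
  intro x ξ₀ ζ₀
  set p : (Fin d → ℝ) × ℝ × ℝ := (x, ξ₀, ζ₀) with hp
  set X : ℝ → (Fin d → ℝ) := fun u => (Ψ u p).1 with hXdef
  set Ξ : ℝ → ℝ := fun u => (Ψ u p).2.1 with hΞdef
  set Z : ℝ → ℝ := fun u => (Ψ u p).2.2 with hZdef
  -- component derivatives of Ψ
  have hX' : ∀ u, HasDerivAt X (-(fun i => α (X u) i ⬝ᵥ z)) u := by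
    intro u
    have h := (ContinuousLinearMap.fst ℝ (Fin d → ℝ) (ℝ × ℝ)).hasFDerivAt.comp_hasDerivAt u
      (hΨ u p)
    exact h
  have hΞ' : ∀ u, HasDerivAt Ξ (-Ξ u * (β (X u) ⬝ᵥ z)) u := by
    intro u
    have h := ((ContinuousLinearMap.fst ℝ ℝ ℝ).comp
      (ContinuousLinearMap.snd ℝ (Fin d → ℝ) (ℝ × ℝ))).hasFDerivAt.comp_hasDerivAt u (hΨ u p)
    exact h
  have hZ' : ∀ u, HasDerivAt Z (-Ξ u * (σ (X u) ⬝ᵥ z)) u := by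
    intro u
    have h := ((ContinuousLinearMap.snd ℝ ℝ ℝ).comp
      (ContinuousLinearMap.snd ℝ (Fin d → ℝ) (ℝ × ℝ))).hasFDerivAt.comp_hasDerivAt u (hΨ u p)
    exact h
  -- the Lipschitz vector field for the x-component
  have hαlip : LipschitzWith C.toNNReal α := by
    refine lipschitzWith_of_nnnorm_fderiv_le (hα.differentiable one_ne_zero) (fun y => ?_)
    rw [← NNReal.coe_le_coe, coe_nnnorm, Real.coe_toNNReal']
    exact le_max_of_le_left (hα_deriv_bdd y)
  let L : (Fin d → Fin m → ℝ) →ₗ[ℝ] (Fin d → ℝ) :=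
    { toFun := fun A => -(fun i => A i ⬝ᵥ z)
      map_add' := fun A B => by
        funext i; simp [add_dotProduct]; ring
      map_smul' := fun c A => by
        funext i; simp [smul_dotProduct, smul_eq_mul] }
  let Lc := LinearMap.toContinuousLinearMap L
  have hvlip : LipschitzWith (‖Lc‖₊ * C.toNNReal) (fun y => Lc (α y)) :=
    Lc.lipschitz.comp hαlip
  have hLc : ∀ A, Lc A = -(fun i => A i ⬝ᵥ z) := fun A => rfl
  -- uniqueness: X u = F u x on [0,1]
  have hXcont : ContinuousOn X (Set.Icc 0 1) := fun u _ =>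
    ((hX' u).continuousAt).continuousWithinAt
  have hFcont : ContinuousOn (fun u => F u x) (Set.Icc 0 1) := fun u _ =>
    ((hF u x).continuousAt).continuousWithinAt
  have hXF : ∀ u ∈ Set.Icc (0:ℝ) 1, X u = F u x := by
    refine ODE_solution_unique_of_mem_Icc_right
      (v := fun _ y => Lc (α y)) (s := fun _ => Set.univ)
      (fun _ _ => hvlip.lipschitzOnWith) hXcont (fun u _ => ?_) (fun _ _ => trivial)
      hFcont (fun u _ => ?_) (fun _ _ => trivial) ?_
    · simpa only [hLc] using (hX' u).hasDerivWithinAt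
    · simpa only [hLc] using (hF u x).hasDerivWithinAt
    · simp [hXdef, hΨ0, hF0, hp]
  -- continuity of flows and integrands
  have hFc : Continuous fun s => F s x :=
    continuous_iff_continuousAt.mpr fun s => (hF s x).continuousAt
  have hb : Continuous fun s => β (F s x) ⬝ᵥ z := by
    simp only [dotProduct]
    exact continuous_finset_sum _ fun i _ =>
      (((continuous_apply i).comp (hβ.continuous.comp hFc)).mul continuous_const)
  set B : ℝ → ℝ := fun u => ∫ r in (0:ℝ)..u, β (F r x) ⬝ᵥ z with hBdef
  have hB : ∀ u, HasDerivAt B (β (F u x) ⬝ᵥ z) u := fun u =>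
    intervalIntegral.integral_hasDerivAt_right (hb.intervalIntegrable 0 u)
      (hb.stronglyMeasurableAtFilter _ _) hb.continuousAt
  have hBc : Continuous B := continuous_iff_continuousAt.mpr fun u => (hB u).continuousAt
  -- the ξ-component
  have hgconst : ∀ u ∈ Set.Icc (0:ℝ) 1, Ξ u * Real.exp (B u) = ξ₀ := by
    have key : ∀ u ∈ Set.Icc (0:ℝ) 1,
        Ξ u * Real.exp (B u) = Ξ 0 * Real.exp (B 0) := by
      refine constant_of_has_deriv_right_zero
        (f := fun u => Ξ u * Real.exp (B u)) (fun u _ => ?_) (fun u hu => ?_)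
      · exact (((hΞ' u).continuousAt).mul
          (((hB u).exp).continuousAt)).continuousWithinAt
      · have hd := (hΞ' u).mul ((hB u).exp)
        have hx : X u = F u x := hXF u (Set.Ico_subset_Icc_self hu)
        have : -Ξ u * (β (X u) ⬝ᵥ z) * Real.exp (B u)
            + Ξ u * (Real.exp (B u) * (β (F u x) ⬝ᵥ z)) = 0 := by
          rw [hx]; ring
        rw [this] at hd
        exact hd.hasDerivWithinAt
    intro u hu
    have h0 : Ξ 0 = ξ₀ := by simp [hΞdef, hΨ0, hp]
    have hB0 : B 0 = 0 := intervalIntegral.integral_same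
    rw [key u hu, h0, hB0, Real.exp_zero, mul_one]
  have hΞval : ∀ u ∈ Set.Icc (0:ℝ) 1, Ξ u = ξ₀ * Real.exp (-B u) := by
    intro u hu
    have := hgconst u hu
    rw [Real.exp_neg, eq_mul_inv_iff_mul_eq₀ (Real.exp_ne_zero _)]
    exact this
  -- the ζ-component
  have hc : Continuous fun s => Real.exp (-B s) * (σ (F s x) ⬝ᵥ z) := by
    refine ((Real.continuous_exp.comp hBc.neg).mul ?_)
    simp only [dotProduct]
    exact continuous_finset_sum _ fun i _ =>
      (((continuous_apply i).comp (hσ.continuous.comp hFc)).mul continuous_const)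
  set I : ℝ → ℝ :=
    fun u => ∫ s in (0:ℝ)..u, Real.exp (-B s) * (σ (F s x) ⬝ᵥ z) with hIdef
  have hI : ∀ u, HasDerivAt I (Real.exp (-B u) * (σ (F u x) ⬝ᵥ z)) u := fun u =>
    intervalIntegral.integral_hasDerivAt_right (hc.intervalIntegrable 0 u)
      (hc.stronglyMeasurableAtFilter _ _) hc.continuousAt
  have hZval : ∀ u ∈ Set.Icc (0:ℝ) 1, Z u = ζ₀ - ξ₀ * I u := by
    have key : ∀ u ∈ Set.Icc (0:ℝ) 1,
        Z u + ξ₀ * I u = Z 0 + ξ₀ * I 0 := by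
      refine constant_of_has_deriv_right_zero
        (f := fun u => Z u + ξ₀ * I u) (fun u _ => ?_) (fun u hu => ?_)
      · exact (((hZ' u).continuousAt).add
          (((hI u).const_mul ξ₀).continuousAt)).continuousWithinAt
      · have hd := (hZ' u).add ((hI u).const_mul ξ₀)
        have hx : X u = F u x := hXF u (Set.Ico_subset_Icc_self hu)
        have hΞu : Ξ u = ξ₀ * Real.exp (-B u) :=
          hΞval u (Set.Ico_subset_Icc_self hu)
        have : -Ξ u * (σ (X u) ⬝ᵥ z)
            + ξ₀ * (Real.exp (-B u) * (σ (F u x) ⬝ᵥ z)) = 0 := by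
          rw [hx, hΞu]; ring
        rw [this] at hd
        exact hd.hasDerivWithinAt
    intro u hu
    have hZ0 : Z 0 = ζ₀ := by simp [hZdef, hΨ0, hp]
    have hI0 : I 0 = 0 := intervalIntegral.integral_same
    have := key u hu
    rw [hZ0, hI0, mul_zero, add_zero] at this
    linarith
  -- assemble
  have h1 : (1:ℝ) ∈ Set.Icc (0:ℝ) 1 := by norm_num
  have e1 : X 1 = F 1 x := hXF 1 h1
  have e2 : Ξ 1 = ξ₀ * Real.exp (-B 1) := hΞval 1 h1
  have e3 : Z 1 = ζ₀ - ξ₀ * I 1 := hZval 1 h1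
  exact Prod.ext e1 (Prod.ext e2 e3)
end
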